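/- Let 0 < 1/n ≪ α, 1/k < 1, let G₁, …, G_m be graphs on a common vertex set V of size n, and let Z ⊆ V be such that every vertex v ∈ V has at least ((k−1)/k + α)|Z| neighbours in Z in every graph G_i. Let J be a graph on at most α|Z|/4 vertices with an edge-colouring χ : E(J) → {1,…,m}. Let I be an independent set in J, let f : I → V be an injection, and suppose V(J) admits an ordering whose initial segment is I such that every vertex has at most k neighbours preceding it. Let U ⊆ V \ f(I) satisfy |U ∩ Z| ≤ α|Z|/4. Then there is an injective map g : V(J) → V extending f, with g(V(J) \ I) ⊆ Z \ U, such that for every edge uv of J, the pair g(u)g(v) is an edge of the graph G_{χ(uv)}. -/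

import Mathlib

/-- Lemma 5.4 (degenerate greedy embedding): let every vertex have at least
`((k−1)/k + α)|Z|` neighbours in `Z` in each graph of the collection; let `J` be a
graph on `Fin h` (ordered by index) with `h ≤ α|Z|/4`, whose first `s` vertices form
an independent set `I`, with every vertex having at most `k` earlier neighbours;
let `f` be an injection of `I` into `V` avoiding... Then any exactly `χ`-coloured
copy of `J` extending `f`, avoiding `U`, with the remaining vertices in `Z`, exists. -/
theorem stmt_5 (α : ℝ) (k : ℕ) (hα : 0 < α) (hαk : α < 1) (hk : 1 ≤ k) :
    ∃ n₀ : ℕ, ∀ n : ℕ, n₀ ≤ n →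
    ∀ (m : ℕ) (G : Fin m → SimpleGraph (Fin n)) (Z : Finset (Fin n)),
    (∀ (i : Fin m) (v : Fin n),
        ((k - 1 : ℝ)/k + α) * Z.card ≤ (((G i).neighborSet v) ∩ ↑Z).ncard) →
    ∀ (h : ℕ) (J : SimpleGraph (Fin h)) (χ : Sym2 (Fin h) → Fin m),
    (h : ℝ) ≤ α * Z.card / 4 →
    ∀ s : ℕ, s ≤ h →
    (∀ u v : Fin h, u.val < s → v.val < s → ¬ J.Adj u v) →
    (∀ v : Fin h, ({u : Fin h | u < v ∧ J.Adj u v}).ncard ≤ k) →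
    ∀ f : Fin h → Fin n,
    (Set.InjOn f {v : Fin h | v.val < s}) →
    ∀ U : Finset (Fin n),
    (∀ v : Fin h, v.val < s → f v ∉ U) →
    ((U ∩ Z).card : ℝ) ≤ α * Z.card / 4 →
    ∃ g : Fin h → Fin n, Function.Injective g ∧
      (∀ v : Fin h, v.val < s → g v = f v) ∧
      (∀ v : Fin h, s ≤ v.val → g v ∈ Z ∧ g v ∉ U) ∧
      (∀ u v : Fin h, J.Adj u v → (G (χ s(u, v))).Adj (g u) (g v)) := by
  classical
  refine ⟨0, ?_⟩
  intro n _ m G Z hdeg h J χ hh s hs hind hdegen f hf U hfU hU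
  have hk0 : (0:ℝ) < k := by exact_mod_cast hk
  have hZ0 : (0:ℝ) ≤ (Z.card : ℝ) := by positivity
  have key : ∀ t : ℕ, s ≤ t → t ≤ h → ∃ g : Fin h → Fin n,
      Set.InjOn g {v : Fin h | v.val < t} ∧
      (∀ v : Fin h, v.val < s → g v = f v) ∧
      (∀ v : Fin h, s ≤ v.val → v.val < t → g v ∈ Z ∧ g v ∉ U) ∧
      (∀ u v : Fin h, u.val < t → v.val < t → J.Adj u v →
        (G (χ s(u, v))).Adj (g u) (g v)) := by
    intro t hst
    induction t, hst using Nat.le_induction with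
    | base =>
      intro _
      exact ⟨f, hf, fun v _ => rfl, fun v h1 h2 => absurd (h1.trans_lt h2) (lt_irrefl s),
        fun u v hu hv hadj => absurd hadj (hind u v hu hv)⟩
    | succ t hst ih =>
      intro ht1
      obtain ⟨g, hginj, hgf, hgZ, hgadj⟩ := ih (by omega)
      set v : Fin h := ⟨t, by omega⟩ with hv
      have hvt : v.val = t := rfl
      set N : Fin h → Finset (Fin n) :=
        fun u => Z.filter (fun z => (G (χ s(u, v))).Adj (g u) z) with hN
      set S : Finset (Fin h) := Finset.univ.filter (fun u => u < v ∧ J.Adj u v) with hS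
      have hScard : S.card ≤ k := by
        have h1 := hdegen v
        rwa [show {u : Fin h | u < v ∧ J.Adj u v} = ↑S by ext u; simp [hS],
          Set.ncard_coe_finset] at h1
      set A : Finset (Fin n) :=
        Z.filter (fun z => ∀ u : Fin h, u < v → J.Adj u v →
          (G (χ s(u, v))).Adj (g u) z) with hA
      have hNsub : ∀ u, N u ⊆ Z := fun u => Finset.filter_subset _ _
      have hNcard : ∀ u : Fin h, ((k - 1 : ℝ)/k + α) * Z.card ≤ ((N u).card : ℝ) := by
        intro u
        have h1 := hdeg (χ s(u, v)) (g u)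
        have heq : ((G (χ s(u,v))).neighborSet (g u)) ∩ ↑Z = ↑(N u) := by
          ext z
          simp [hN, SimpleGraph.mem_neighborSet, and_comm]
        rwa [heq, Set.ncard_coe_finset] at h1
      have hsub : Z \ S.biUnion (fun u => Z \ N u) ⊆ A := by
        intro z hz
        simp only [Finset.mem_sdiff, Finset.mem_biUnion] at hz
        simp only [hA, Finset.mem_filter]
        refine ⟨hz.1, fun u hu hadj => ?_⟩
        by_contra hno
        exact hz.2 ⟨u, by simp [hS, hu, hadj], by simp [hN, hz.1, hno]⟩
      have hAcard : α * Z.card ≤ (A.card : ℝ) := by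
        have h1 : Z.card ≤ (Z \ S.biUnion (fun u => Z \ N u)).card
            + (S.biUnion (fun u => Z \ N u)).card :=
          Finset.card_le_card_sdiff_add_card
        have h2 : (S.biUnion (fun u => Z \ N u)).card ≤ ∑ u ∈ S, (Z \ N u).card :=
          Finset.card_biUnion_le
        have h3 : ((∑ u ∈ S, (Z \ N u).card : ℕ) : ℝ) ≤ (1 - α) * Z.card := by
          have hterm : ∀ u ∈ S, ((Z \ N u).card : ℝ) ≤ (1/(k:ℝ) - α) * Z.card := by
            intro u _
            have hc := hNcard u
            have hle : (N u).card ≤ Z.card := Finset.card_le_card (hNsub u)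
            rw [Finset.card_sdiff_of_subset (hNsub u)]
            push_cast [hle]
            have : ((k:ℝ) - 1)/k = 1 - 1/k := by field_simp
            rw [this] at hc
            nlinarith
          calc ((∑ u ∈ S, (Z \ N u).card : ℕ) : ℝ)
              = ∑ u ∈ S, ((Z \ N u).card : ℝ) := by push_cast; ring
            _ ≤ ∑ u ∈ S, (1/(k:ℝ) - α) * Z.card := Finset.sum_le_sum hterm
            _ = (S.card : ℝ) * ((1/(k:ℝ) - α) * Z.card) := by
                rw [Finset.sum_const, nsmul_eq_mul]
            _ ≤ (1 - α) * Z.card := by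
                rcases Nat.eq_zero_or_pos S.card with h0 | h0
                · rw [h0]
                  push_cast
                  nlinarith
                · have hj1 : (1:ℝ) ≤ (S.card : ℝ) := by exact_mod_cast h0
                  have hjk : (S.card : ℝ) ≤ (k:ℝ) := by exact_mod_cast hScard
                  have hsc : (S.card : ℝ) * (1/(k:ℝ) - α) ≤ 1 - α := by
                    have hSb : (S.card:ℝ) * (1/(k:ℝ)) ≤ 1 := by
                      rw [mul_one_div, div_le_one hk0]; exact hjk
                    have hSa : α ≤ (S.card:ℝ) * α := le_mul_of_one_le_left hα.le hj1
                    nlinarith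
                  calc (S.card : ℝ) * ((1/(k:ℝ) - α) * Z.card)
                      = ((S.card : ℝ) * (1/(k:ℝ) - α)) * Z.card := by ring
                    _ ≤ (1 - α) * Z.card := mul_le_mul_of_nonneg_right hsc hZ0
        have h4 : ((Z \ S.biUnion (fun u => Z \ N u)).card : ℝ) ≤ (A.card : ℝ) := by
          exact_mod_cast Finset.card_le_card hsub
        have h1' : ((Z.card : ℕ) : ℝ) ≤ ((Z \ S.biUnion (fun u => Z \ N u)).card : ℝ)
            + ((S.biUnion (fun u => Z \ N u)).card : ℝ) := by exact_mod_cast h1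
        have h2' : ((S.biUnion (fun u => Z \ N u)).card : ℝ)
            ≤ ((∑ u ∈ S, (Z \ N u).card : ℕ) : ℝ) := by exact_mod_cast h2
        linarith
      set T : Finset (Fin h) := Finset.univ.filter (fun u => u.val < t) with hT
      have hTcard : T.card ≤ h - 1 := by
        have hsub2 : T ⊆ Finset.univ.erase v := by
          intro u hu
          simp only [hT, Finset.mem_filter] at hu
          refine Finset.mem_erase.mpr ⟨?_, Finset.mem_univ u⟩
          intro he
          rw [he] at hu
          omega
        calc T.card ≤ (Finset.univ.erase v).card := Finset.card_le_card hsub2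
          _ = h - 1 := by
              rw [Finset.card_erase_of_mem (Finset.mem_univ v)]
              simp
      set A' : Finset (Fin n) := (A \ U) \ T.image g with hA'
      have hA'card : (0:ℝ) < (A'.card : ℝ) := by
        have e1 : (A \ U).card + (A ∩ U).card = A.card := Finset.card_sdiff_add_card_inter A U
        have e2 : (A ∩ U).card ≤ (U ∩ Z).card := by
          apply Finset.card_le_card
          intro x hx
          simp only [Finset.mem_inter] at hx ⊢
          exact ⟨hx.2, Finset.filter_subset _ _ hx.1⟩
        have e3 : (A \ U).card ≤ A'.card + (T.image g).card :=
          Finset.card_le_card_sdiff_add_card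
        have e4 : (T.image g).card ≤ h - 1 := le_trans Finset.card_image_le hTcard
        have hh1 : 1 ≤ h := by omega
        have e4' : ((T.image g).card : ℝ) ≤ (h:ℝ) - 1 := by
          have : ((T.image g).card : ℝ) ≤ ((h - 1 : ℕ) : ℝ) := by exact_mod_cast e4
          rwa [Nat.cast_sub hh1, Nat.cast_one] at this
        have e1' : ((A \ U).card : ℝ) + ((A ∩ U).card : ℝ) = (A.card : ℝ) := by
          exact_mod_cast e1
        have e2' : ((A ∩ U).card : ℝ) ≤ ((U ∩ Z).card : ℝ) := by exact_mod_cast e2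
        have e3' : ((A \ U).card : ℝ) ≤ (A'.card : ℝ) + ((T.image g).card : ℝ) := by
          exact_mod_cast e3
        have hh' : (h:ℝ) ≤ α * Z.card / 4 := hh
        linarith
      have hA'ne : A'.Nonempty := by
        rw [← Finset.card_pos]
        exact_mod_cast hA'card
      obtain ⟨z, hz⟩ := hA'ne
      simp only [hA', Finset.mem_sdiff] at hz
      obtain ⟨⟨hzA, hzU⟩, hzim⟩ := hz
      have hzZ : z ∈ Z := Finset.filter_subset _ _ hzA
      have hzAdj : ∀ u : Fin h, u < v → J.Adj u v → (G (χ s(u, v))).Adj (g u) z := by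
        have := (Finset.mem_filter.mp hzA).2
        exact this
      have hzim' : ∀ u : Fin h, u.val < t → g u ≠ z := by
        intro u hu he
        exact hzim (Finset.mem_image.mpr ⟨u, by simp [hT, hu], he⟩)
      refine ⟨Function.update g v z, ?_, ?_, ?_, ?_⟩
      · intro a ha b hb hab
        simp only [Set.mem_setOf_eq] at ha hb
        by_cases hav : a = v <;> by_cases hbv : b = v
        · rw [hav, hbv]
        · exfalso
          have hbt : b.val < t := by
            have : b.val ≠ t := fun hbt => hbv (Fin.ext hbt)
            omega
          rw [hav, Function.update_self, Function.update_of_ne hbv] at hab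
          exact hzim' b hbt hab.symm
        · exfalso
          have hat : a.val < t := by
            have : a.val ≠ t := fun h' => hav (Fin.ext h')
            omega
          rw [hbv, Function.update_self, Function.update_of_ne hav] at hab
          exact hzim' a hat hab
        · have hat : a.val < t := by
            have : a.val ≠ t := fun h' => hav (Fin.ext h')
            omega
          have hbt : b.val < t := by
            have : b.val ≠ t := fun h' => hbv (Fin.ext h')
            omega
          rw [Function.update_of_ne hav, Function.update_of_ne hbv] at hab
          exact hginj hat hbt hab
      · intro w hw
        have hwv : w ≠ v := by
          intro he
          rw [he] at hw
          omega
        rw [Function.update_of_ne hwv]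
        exact hgf w hw
      · intro w hw1 hw2
        by_cases hwv : w = v
        · rw [hwv, Function.update_self]
          exact ⟨hzZ, hzU⟩
        · have hwt : w.val < t := by
            have : w.val ≠ t := fun h' => hwv (Fin.ext h')
            omega
          rw [Function.update_of_ne hwv]
          exact hgZ w hw1 hwt
      · intro a b ha hb hadj
        by_cases hav : a = v <;> by_cases hbv : b = v
        · exfalso
          rw [hav, hbv] at hadj
          exact J.loopless.irrefl v hadj
        · have hbt : b.val < t := by
            have : b.val ≠ t := fun h' => hbv (Fin.ext h')
            omega
          have hblt : b < v := by
            simp only [hv, Fin.lt_def]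
            exact hbt
          rw [hav, Function.update_self, Function.update_of_ne hbv]
          have := hzAdj b hblt (by rw [hav] at hadj; exact hadj.symm)
          rw [Sym2.eq_swap]
          exact this.symm
        · have hat : a.val < t := by
            have : a.val ≠ t := fun h' => hav (Fin.ext h')
            omega
          have halt : a < v := by
            simp only [hv, Fin.lt_def]
            exact hat
          rw [hbv, Function.update_self, Function.update_of_ne hav]
          exact hzAdj a halt (by rw [hbv] at hadj; exact hadj)
        · have hat : a.val < t := by
            have : a.val ≠ t := fun h' => hav (Fin.ext h')
            omega
          have hbt : b.val < t := by
            have : b.val ≠ t := fun h' => hbv (Fin.ext h')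
            omega
          rw [Function.update_of_ne hav, Function.update_of_ne hbv]
          exact hgadj a b hat hbt hadj
  obtain ⟨g, hginj, hgf, hgZ, hgadj⟩ := key h hs le_rfl
  refine ⟨g, ?_, hgf, fun w hw => hgZ w hw w.isLt, fun u w hadj => hgadj u w u.isLt w.isLt hadj⟩
  intro a b hab
  exact hginj a.isLt b.isLt hab
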